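/- arXiv:1404.6067 — 3 statements merged into one kernel-verified Lean document; each statement's English description precedes it below -/
import Mathlib

section
/- Let γ̄_{M_-}, γ̄_{N_+} ⊆ P − ⊥ and γ̄_{⊤*} ⊆ P* − ⊥* be up-closed sets whose union γ̄ is blocking. Then at least one of the following holds: (1) one of {M_+, M_-^*}, {M_-, M_+^*}, {N_+, N_-^*}, {N_-, N_+^*} is a subset of γ̄; (2) M_- ∈ γ̄_{M_-} and {N_+, ⊤*} ⊆ γ̄; (3) N_- ∈ γ̄_{M_-} and {M_+, ⊤*} ⊆ γ̄; (4) ⊤ ∈ γ̄_{M_-} and ({M_-^*, N_+^*} ⊆ γ̄_{⊤*} or {M_+^*, N_-^*} ⊆ γ̄_{⊤*}); (5) γ̄_{M_-} ⊆ {M_+, N_+, ⊤} and γ̄_{⊤*} ⊆ {M_+^*, N_+^*, ⊤*} and ({M_-, N_+} ⊆ γ̄ or {M_+, N_-} ⊆ γ̄); (6) γ̄_{M_-} = ∅ and N_-^* ∉ γ̄_{⊤*} and {M_-^*, N_+^*, ⊤} ⊆ γ̄ and γ̄_{N_+} ⊆ {N_+, ⊤}; (7) γ̄_{M_-} = ∅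 and {M_+^*, N_-^*, ⊤} ⊆ γ̄ and γ̄_{N_+} ⊆ {M_+, ⊤}. -/
/-- The set of promises `{⊥, M₋, M₊, N₋, N₊, ⊤}`. -/
inductive Promise : Type
  | bot | Mm | Mp | Nm | Np | top
  deriving DecidableEq

/-- The partial order on promises generated by `⊤ ≥ M₊ ≥ M₋ ≥ ⊥` and `⊤ ≥ N₊ ≥ N₋ ≥ ⊥`. -/
def ple : Promise → Promise → Prop
  | Promise.bot, _ => True
  | _, Promise.top => True
  | Promise.Mm, Promise.Mm => True
  | Promise.Mm, Promise.Mp => True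
  | Promise.Mp, Promise.Mp => True
  | Promise.Nm, Promise.Nm => True
  | Promise.Nm, Promise.Np => True
  | Promise.Np, Promise.Np => True
  | _, _ => False

/-- Promises and co-promises: `Sum.inl` is a promise, `Sum.inr` a co-promise. -/
abbrev PP := Promise ⊕ Promise

/-- The order on promises and co-promises: the orders on the two copies, with no
comparabilities between promises and co-promises. -/
def pple : PP → PP → Prop
  | Sum.inl p, Sum.inl q => ple p q
  | Sum.inr p, Sum.inr q => ple p q
  | _, _ => False

/-- Up-closed subsets of `PP`. -/
def UpClosed (B : Set PP) : Prop := ∀ x ∈ B, ∀ y, pple x y → y ∈ B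

/-- The five possible attainability sets. -/
def attainSet1 : Set PP := Sum.inl '' Set.univ ∪ {Sum.inr Promise.bot}
def attainSet2 : Set PP := Sum.inr '' Set.univ ∪ {Sum.inl Promise.bot}
def attainSet3 : Set PP :=
  {Sum.inl Promise.bot, Sum.inl Promise.Mm, Sum.inl Promise.Mp,
   Sum.inr Promise.bot, Sum.inr Promise.Nm, Sum.inr Promise.Np}
def attainSet4 : Set PP :=
  {Sum.inl Promise.bot, Sum.inl Promise.Nm, Sum.inl Promise.Np,
   Sum.inr Promise.bot, Sum.inr Promise.Mm, Sum.inr Promise.Mp}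
def attainSet5 : Set PP :=
  {Sum.inl Promise.bot, Sum.inl Promise.Mm, Sum.inl Promise.Nm,
   Sum.inr Promise.bot, Sum.inr Promise.Mm, Sum.inr Promise.Nm}

/-- A set of promises and co-promises is blocking if it meets each of the five
possible attainability sets. -/
def Blocking (B : Set PP) : Prop :=
  (B ∩ attainSet1).Nonempty ∧ (B ∩ attainSet2).Nonempty ∧ (B ∩ attainSet3).Nonempty ∧
  (B ∩ attainSet4).Nonempty ∧ (B ∩ attainSet5).Nonempty

open Promise

theorem bool_aux : ∀ (aMm aMp aNm aNp aT bMm bMp bNm bNp bT cMm cMp cNm cNp cT : Bool),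
  (((!aMm||aMp) && ((!aMp||aT) && ((!aNm||aNp) && ((!aNp||aT) && ((!bMm||bMp) && ((!bMp||bT) && ((!bNm||bNp) && ((!bNp||bT) && ((!cMm||cMp) && ((!cMp||cT) && ((!cNm||cNp) && ((!cNp||cT) && ((aMm || (aMp || (aNm || (aNp || (aT || (bMm || (bMp || (bNm || (bNp || bT))))))))) && ((cMm || (cMp || (cNm || (cNp || cT)))) && ((aMm || (bMm || (aMp || (bMp || (cNm || cNp))))) && ((aNm || (bNm || (aNp || (bNp || (cMm || cMp))))) && (aMm || (bMm || (aNm || (bNm || (cMm || cNm)))))))))))))))))))))) = true →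
  (((((aMp||bMp) && cMm) || (((aMm||bMm) && cMp) || (((aNp||bNp) && cNm) || ((aNm||bNm) && cNp)))) || ((aMm && ((aNp||bNp) && cT)) || ((aNm && ((aMp||bMp) && cT)) || ((aT && (((cMm && cNp)) || ((cMp && cNm)))) || (((!aMm && !aNm) && ((!cMm && !cNm) && ((((aMm||bMm) && (aNp||bNp))) || (((aMp||bMp) && (aNm||bNm)))))) || (((!aMm && (!aMp && (!aNm && (!aNp && !aT)))) && (!cNm && ((cMm && (cNp && (aT||bT))) && (!bMm && (!bMp && !bNm))))) || ((!aMm && (!aMp && (!aNm && (!aNp && !aT)))) && ((cMp && (cNm && (aT||bT))) && (!bMm && (!bNm && !bNp))))))))))) = true := by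
  decide

lemma hb1' (gM gN gT : Set Promise) (hbM : bot ∉ gM) (hbN : bot ∉ gN) (hbT : bot ∉ gT)
    (h1 : ((Sum.inl '' (gM ∪ gN) ∪ Sum.inr '' gT) ∩ attainSet1).Nonempty) :
    Mm ∈ gM ∨ Mp ∈ gM ∨ Nm ∈ gM ∨ Np ∈ gM ∨ top ∈ gM ∨
      Mm ∈ gN ∨ Mp ∈ gN ∨ Nm ∈ gN ∨ Np ∈ gN ∨ top ∈ gN := by
  obtain ⟨x, hx, hx1⟩ := h1
  rcases hx with ⟨p, hp, rfl⟩ | ⟨p, hp, rfl⟩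
  · rcases hp with hp | hp <;> cases p <;> tauto
  · simp [attainSet1] at hx1; subst hx1; exact absurd hp hbT

lemma hb2' (gM gN gT : Set Promise) (hbM : bot ∉ gM) (hbN : bot ∉ gN) (hbT : bot ∉ gT)
    (h2 : ((Sum.inl '' (gM ∪ gN) ∪ Sum.inr '' gT) ∩ attainSet2).Nonempty) :
    Mm ∈ gT ∨ Mp ∈ gT ∨ Nm ∈ gT ∨ Np ∈ gT ∨ top ∈ gT := by
  obtain ⟨x, hx, hx2⟩ := h2
  rcases hx with ⟨p, hp, rfl⟩ | ⟨p, hp, rfl⟩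
  · simp [attainSet2] at hx2; subst hx2
    rcases hp with hp | hp
    · exact absurd hp hbM
    · exact absurd hp hbN
  · cases p <;> tauto

lemma hb3' (gM gN gT : Set Promise) (hbM : bot ∉ gM) (hbN : bot ∉ gN) (hbT : bot ∉ gT)
    (h3 : ((Sum.inl '' (gM ∪ gN) ∪ Sum.inr '' gT) ∩ attainSet3).Nonempty) :
    Mm ∈ gM ∨ Mm ∈ gN ∨ Mp ∈ gM ∨ Mp ∈ gN ∨ Nm ∈ gT ∨ Np ∈ gT := by
  obtain ⟨x, hx, hx3⟩ := h3
  rcases hx with ⟨p, hp, rfl⟩ | ⟨p, hp, rfl⟩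
  · cases p <;> simp_all [attainSet3] <;> tauto
  · cases p <;> simp_all [attainSet3] <;> tauto

lemma hb4' (gM gN gT : Set Promise) (hbM : bot ∉ gM) (hbN : bot ∉ gN) (hbT : bot ∉ gT)
    (h4 : ((Sum.inl '' (gM ∪ gN) ∪ Sum.inr '' gT) ∩ attainSet4).Nonempty) :
    Nm ∈ gM ∨ Nm ∈ gN ∨ Np ∈ gM ∨ Np ∈ gN ∨ Mm ∈ gT ∨ Mp ∈ gT := by
  obtain ⟨x, hx, hx4⟩ := h4
  rcases hx with ⟨p, hp, rfl⟩ | ⟨p, hp, rfl⟩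
  · cases p <;> simp_all [attainSet4] <;> tauto
  · cases p <;> simp_all [attainSet4] <;> tauto

lemma hb5' (gM gN gT : Set Promise) (hbM : bot ∉ gM) (hbN : bot ∉ gN) (hbT : bot ∉ gT)
    (h5 : ((Sum.inl '' (gM ∪ gN) ∪ Sum.inr '' gT) ∩ attainSet5).Nonempty) :
    Mm ∈ gM ∨ Mm ∈ gN ∨ Nm ∈ gM ∨ Nm ∈ gN ∨ Mm ∈ gT ∨ Nm ∈ gT := by
  obtain ⟨x, hx, hx5⟩ := h5
  rcases hx with ⟨p, hp, rfl⟩ | ⟨p, hp, rfl⟩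
  · cases p <;> simp_all [attainSet5] <;> tauto
  · cases p <;> simp_all [attainSet5] <;> tauto

set_option maxHeartbeats 400000 in
/-- Lemma on up-closed sets `γ̄_{M₋}, γ̄_{N₊} ⊆ P - ⊥` and `γ̄_{⊤*} ⊆ P* - ⊥*`
whose union is blocking.  Here `gM, gN : Set Promise` stand for `γ̄_{M₋}` and
`γ̄_{N₊}`, and `gT : Set Promise` stands for `γ̄_{⊤*}` (as a set of starred
promises); the union `γ̄ ⊆ P ∪ P*` is `Sum.inl '' (gM ∪ gN) ∪ Sum.inr '' gT`. -/
theorem blocking_union_cases_minus (gM gN gT : Set Promise)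
    (hbM : bot ∉ gM) (hbN : bot ∉ gN) (hbT : bot ∉ gT)
    (hupM : ∀ p ∈ gM, ∀ q, ple p q → q ∈ gM)
    (hupN : ∀ p ∈ gN, ∀ q, ple p q → q ∈ gN)
    (hupT : ∀ p ∈ gT, ∀ q, ple p q → q ∈ gT)
    (hblock : Blocking (Sum.inl '' (gM ∪ gN) ∪ Sum.inr '' gT)) :
    -- (1) one of {M₊, M₋*}, {M₋, M₊*}, {N₊, N₋*}, {N₋, N₊*} is a subset of γ̄
    ((Mp ∈ gM ∪ gN ∧ Mm ∈ gT) ∨ (Mm ∈ gM ∪ gN ∧ Mp ∈ gT) ∨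
     (Np ∈ gM ∪ gN ∧ Nm ∈ gT) ∨ (Nm ∈ gM ∪ gN ∧ Np ∈ gT)) ∨
    -- (2) M₋ ∈ γ̄_{M₋} and {N₊, ⊤*} ⊆ γ̄
    (Mm ∈ gM ∧ Np ∈ gM ∪ gN ∧ top ∈ gT) ∨
    -- (3) N₋ ∈ γ̄_{M₋} and {M₊, ⊤*} ⊆ γ̄
    (Nm ∈ gM ∧ Mp ∈ gM ∪ gN ∧ top ∈ gT) ∨
    -- (4) ⊤ ∈ γ̄_{M₋} and {M₋*, N₊*} ⊆ γ̄_{⊤*} or {M₊*, N₋*} ⊆ γ̄_{⊤*}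
    (top ∈ gM ∧ ((Mm ∈ gT ∧ Np ∈ gT) ∨ (Mp ∈ gT ∧ Nm ∈ gT))) ∨
    -- (5)
    (gM ⊆ ({Mp, Np, top} : Set Promise) ∧ gT ⊆ ({Mp, Np, top} : Set Promise) ∧
      ((Mm ∈ gM ∪ gN ∧ Np ∈ gM ∪ gN) ∨ (Mp ∈ gM ∪ gN ∧ Nm ∈ gM ∪ gN))) ∨
    -- (6)
    (gM = ∅ ∧ Nm ∉ gT ∧ (Mm ∈ gT ∧ Np ∈ gT ∧ top ∈ gM ∪ gN) ∧
      gN ⊆ ({Np, top} : Set Promise)) ∨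
    -- (7)
    (gM = ∅ ∧ (Mp ∈ gT ∧ Nm ∈ gT ∧ top ∈ gM ∪ gN) ∧
      gN ⊆ ({Mp, top} : Set Promise)) := by
  classical
  obtain ⟨h1, h2, h3, h4, h5⟩ := hblock
  -- upward closure facts
  have iM1 : Mm ∈ gM → Mp ∈ gM := fun h => hupM Mm h Mp trivial
  have iM2 : Mp ∈ gM → top ∈ gM := fun h => hupM Mp h top trivial
  have iM3 : Nm ∈ gM → Np ∈ gM := fun h => hupM Nm h Np trivial
  have iM4 : Np ∈ gM → top ∈ gM := fun h => hupM Np h top trivial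
  have iN1 : Mm ∈ gN → Mp ∈ gN := fun h => hupN Mm h Mp trivial
  have iN2 : Mp ∈ gN → top ∈ gN := fun h => hupN Mp h top trivial
  have iN3 : Nm ∈ gN → Np ∈ gN := fun h => hupN Nm h Np trivial
  have iN4 : Np ∈ gN → top ∈ gN := fun h => hupN Np h top trivial
  have iT1 : Mm ∈ gT → Mp ∈ gT := fun h => hupT Mm h Mp trivial
  have iT2 : Mp ∈ gT → top ∈ gT := fun h => hupT Mp h top trivial
  have iT3 : Nm ∈ gT → Np ∈ gT := fun h => hupT Nm h Np trivial
  have iT4 : Np ∈ gT → top ∈ gT := fun h => hupT Np h top trivial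
  -- blocking facts
  have hb1 := hb1' gM gN gT hbM hbN hbT h1
  have hb2 := hb2' gM gN gT hbM hbN hbT h2
  have hb3 := hb3' gM gN gT hbM hbN hbT h3
  have hb4 := hb4' gM gN gT hbM hbN hbT h4
  have hb5 := hb5' gM gN gT hbM hbN hbT h5
  have haux := bool_aux (decide (Mm ∈ gM)) (decide (Mp ∈ gM)) (decide (Nm ∈ gM))
    (decide (Np ∈ gM)) (decide (top ∈ gM))
    (decide (Mm ∈ gN)) (decide (Mp ∈ gN)) (decide (Nm ∈ gN))
    (decide (Np ∈ gN)) (decide (top ∈ gN))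
    (decide (Mm ∈ gT)) (decide (Mp ∈ gT)) (decide (Nm ∈ gT))
    (decide (Np ∈ gT)) (decide (top ∈ gT))
    (by
      simp only [Bool.and_eq_true, Bool.or_eq_true, Bool.not_eq_true', decide_eq_true_eq,
        decide_eq_false_iff_not]
      refine ⟨?_, ?_, ?_, ?_, ?_, ?_, ?_, ?_, ?_, ?_, ?_, ?_, ?_, ?_, ?_, ?_, ?_⟩
      exacts [not_or_of_imp iM1, not_or_of_imp iM2, not_or_of_imp iM3, not_or_of_imp iM4,
        not_or_of_imp iN1, not_or_of_imp iN2, not_or_of_imp iN3, not_or_of_imp iN4,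
        not_or_of_imp iT1, not_or_of_imp iT2, not_or_of_imp iT3, not_or_of_imp iT4,
        hb1, hb2, hb3, hb4, hb5])
  simp only [Bool.and_eq_true, Bool.or_eq_true, Bool.not_eq_true', decide_eq_true_eq,
    decide_eq_false_iff_not] at haux
  have memU : ∀ p : Promise, (p ∈ gM ∨ p ∈ gN) → p ∈ gM ∪ gN := fun p h => h
  rcases haux with (h|h|h|h) | h | h | h | h | h | h
  · exact Or.inl (Or.inl ⟨memU _ h.1, h.2⟩)
  · exact Or.inl (Or.inr (Or.inl ⟨memU _ h.1, h.2⟩))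
  · exact Or.inl (Or.inr (Or.inr (Or.inl ⟨memU _ h.1, h.2⟩)))
  · exact Or.inl (Or.inr (Or.inr (Or.inr ⟨memU _ h.1, h.2⟩)))
  · exact Or.inr (Or.inl ⟨h.1, memU _ h.2.1, h.2.2⟩)
  · exact Or.inr (Or.inr (Or.inl ⟨h.1, memU _ h.2.1, h.2.2⟩))
  · exact Or.inr (Or.inr (Or.inr (Or.inl ⟨h.1, h.2⟩)))
  · obtain ⟨⟨hMm, hNm⟩, ⟨hcMm, hcNm⟩, hrest⟩ := h
    refine Or.inr (Or.inr (Or.inr (Or.inr (Or.inl ⟨?_, ?_, ?_⟩))))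
    · intro p hp; cases p <;> simp_all
    · intro p hp; cases p <;> simp_all
    · rcases hrest with ⟨hx, hy⟩ | ⟨hx, hy⟩
      · exact Or.inl ⟨memU _ hx, memU _ hy⟩
      · exact Or.inr ⟨memU _ hx, memU _ hy⟩
  · obtain ⟨⟨h1', h2', h3', h4', h5'⟩, hcNm, ⟨hcMm, hcNp, hT⟩, hN1, hN2, hN3⟩ := h
    refine Or.inr (Or.inr (Or.inr (Or.inr (Or.inr (Or.inl ⟨?_, hcNm, ⟨hcMm, hcNp, memU _ hT⟩, ?_⟩)))))
    · ext p; cases p <;> simp_all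
    · intro p hp; cases p <;> simp_all
  · obtain ⟨⟨h1', h2', h3', h4', h5'⟩, ⟨hcMp, hcNm, hT⟩, hN1, hN2, hN3⟩ := h
    refine Or.inr (Or.inr (Or.inr (Or.inr (Or.inr (Or.inr ⟨?_, ⟨hcMp, hcNm, memU _ hT⟩, ?_⟩)))))
    · ext p; cases p <;> simp_all
    · intro p hp; cases p <;> simp_all
end

section
/- Let γ̄_{M_+}, γ̄_{N_-} ⊆ P − ⊥ and γ̄_{⊤*} ⊆ P* − ⊥* be up-closed sets whose union γ̄ is blocking. Then at least one of the following holds: (1) one of the six sets {M_+, M_-^*}, {M_-, M_+^*}, {N_+, N_-^*}, {N_-, N_+^*}, {M_-, N_+, ⊤*}, {M_+^*, N_-^*, ⊤} is a subset of γ̄; (2) {M_+, N_-, ⊤*} ⊆ γ̄ and γ̄_{M_+} meets {M_+, N_-}; (3) ⊤ ∈ γ̄_{M_+} and {M_-^*, N_+^*} ⊆ γ̄_{⊤*}; (4) γ̄_{M_+} ⊆ {⊤, N_+} and γ̄_{N_-} = {⊤, M_+, N_+, N_-} and ⊤* ∈ γ̄_{⊤*} ⊆ {⊤*, M_+^*};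 (5) γ̄_{M_+} = ∅ and ⊤ ∈ γ̄_{N_-} ⊆ {⊤, N_+} and γ̄_{⊤*} = {⊤*, M_+^*, M_-^*, N_+^*}. -/
open Promise

set_option maxHeartbeats 1000000 in
def keyHyp (tM pM mM qM nM tN pN mN qN nN tT pT mT qT nT : Bool) : Bool :=
  ((!mM || pM) && ((!pM || tM) && ((!nM || qM) && ((!qM || tM) && ((!mN || pN) && ((!pN || tN) && ((!nN || qN) && ((!qN || tN) && ((!mT || pT) && ((!pT || tT) && ((!nT || qT) && ((!qT || tT) && ((tM || tN) && (tT && ((mM || (mN || (pM || (pN || (nT || qT))))) && ((qM || (qN || (nM || (nN || (mT || pT))))) && (mM || (mN || (nM || (nN || (mT || nT)))))))))))))))))))))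

def keyConc (tM pM mM qM nM tN pN mN qN nN tT pT mT qT nT : Bool) : Bool :=
  (((pM || pN) && mT) || (((mM || mN) && pT) || (((qM || qN) && nT) || (((nM || nN) && qT) || (((mM || mN) && ((qM || qN) && tT)) || ((pT && (nT && (tM || tN))) || (((pM || pN) && ((nM || nN) && (tT && (pM || nM)))) || ((tM && (mT && qT)) || (((!pM && (!mM && !nM)) && ((tN && (pN && (qN && (nN && !mN)))) && (tT && (!mT && (!qT && !nT))))) || ((!tM && (!pM && (!mM && (!qM && !nM)))) && ((tN && (!pN && (!mN && !nN))) && (tT && (pT && (mT && (qT && !nT)))))))))))))))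

set_option maxHeartbeats 2000000 in
theorem key2 : ∀ tM pM mM qM nM tN pN mN qN nN tT pT mT qT nT : Bool,
    keyHyp tM pM mM qM nM tN pN mN qN nN tT pT mT qT nT = true →
    keyConc tM pM mM qM nM tN pN mN qN nN tT pT mT qT nT = true := by decide



set_option maxHeartbeats 4000000 in
/-- Lemma on up-closed sets `γ̄_{M₊}, γ̄_{N₋} ⊆ P - ⊥` and `γ̄_{⊤*} ⊆ P* - ⊥*`
whose union is blocking.  Here `gM, gN : Set Promise` stand for `γ̄_{M₊}` and
`γ̄_{N₋}`, and `gT : Set Promise` stands for `γ̄_{⊤*}` (as a set of starred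
promises); the union `γ̄ ⊆ P ∪ P*` is `Sum.inl '' (gM ∪ gN) ∪ Sum.inr '' gT`. -/
theorem blocking_union_cases_plus (gM gN gT : Set Promise)
    (hbM : bot ∉ gM) (hbN : bot ∉ gN) (hbT : bot ∉ gT)
    (hupM : ∀ p ∈ gM, ∀ q, ple p q → q ∈ gM)
    (hupN : ∀ p ∈ gN, ∀ q, ple p q → q ∈ gN)
    (hupT : ∀ p ∈ gT, ∀ q, ple p q → q ∈ gT)
    (hblock : Blocking (Sum.inl '' (gM ∪ gN) ∪ Sum.inr '' gT)) :
    -- (1) one of the six listed sets is a subset of γ̄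
    ((Mp ∈ gM ∪ gN ∧ Mm ∈ gT) ∨ (Mm ∈ gM ∪ gN ∧ Mp ∈ gT) ∨
     (Np ∈ gM ∪ gN ∧ Nm ∈ gT) ∨ (Nm ∈ gM ∪ gN ∧ Np ∈ gT) ∨
     (Mm ∈ gM ∪ gN ∧ Np ∈ gM ∪ gN ∧ top ∈ gT) ∨
     (Mp ∈ gT ∧ Nm ∈ gT ∧ top ∈ gM ∪ gN)) ∨
    -- (2) {M₊, N₋, ⊤*} ⊆ γ̄ and γ̄_{M₊} meets {M₊, N₋}
    ((Mp ∈ gM ∪ gN ∧ Nm ∈ gM ∪ gN ∧ top ∈ gT) ∧ (Mp ∈ gM ∨ Nm ∈ gM)) ∨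
    -- (3) ⊤ ∈ γ̄_{M₊} and {M₋*, N₊*} ⊆ γ̄_{⊤*}
    (top ∈ gM ∧ Mm ∈ gT ∧ Np ∈ gT) ∨
    -- (4)
    (gM ⊆ ({top, Np} : Set Promise) ∧ gN = ({top, Mp, Np, Nm} : Set Promise) ∧
      top ∈ gT ∧ gT ⊆ ({top, Mp} : Set Promise)) ∨
    -- (5)
    (gM = ∅ ∧ top ∈ gN ∧ gN ⊆ ({top, Np} : Set Promise) ∧
      gT = ({top, Mp, Mm, Np} : Set Promise)) := by
  classical
  have hinl : ∀ p : Promise, Sum.inl p ∈ (Sum.inl '' (gM ∪ gN) ∪ Sum.inr '' gT) ↔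
      p ∈ gM ∪ gN := fun p => by simp
  have hinr : ∀ p : Promise, Sum.inr p ∈ (Sum.inl '' (gM ∪ gN) ∪ Sum.inr '' gT) ↔
      p ∈ gT := fun p => by simp
  have A1 : top ∈ gM ∨ top ∈ gN := by
    obtain ⟨x, hxγ, hx1⟩ := hblock.1
    simp only [attainSet1, Set.mem_union, Set.mem_image, Set.mem_univ, true_and,
      Set.mem_singleton_iff] at hx1
    rcases hx1 with ⟨p, rfl⟩ | rfl
    · rcases (hinl _).1 hxγ with h | h
      · exact Or.inl (hupM p h top (by cases p <;> trivial))
      · exact Or.inr (hupN p h top (by cases p <;> trivial))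
    · exact absurd ((hinr _).1 hxγ) hbT
  have A2 : top ∈ gT := by
    obtain ⟨x, hxγ, hx2⟩ := hblock.2.1
    simp only [attainSet2, Set.mem_union, Set.mem_image, Set.mem_univ, true_and,
      Set.mem_singleton_iff] at hx2
    rcases hx2 with ⟨p, rfl⟩ | rfl
    · exact hupT p ((hinr _).1 hxγ) top (by cases p <;> trivial)
    · rcases (hinl _).1 hxγ with h | h
      · exact absurd h hbM
      · exact absurd h hbN
  have A3 : Mm ∈ gM ∨ Mm ∈ gN ∨ Mp ∈ gM ∨ Mp ∈ gN ∨ Nm ∈ gT ∨ Np ∈ gT := by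
    obtain ⟨x, hxγ, hx3⟩ := hblock.2.2.1
    simp only [attainSet3, Set.mem_insert_iff, Set.mem_singleton_iff] at hx3
    rcases hx3 with rfl | rfl | rfl | rfl | rfl | rfl
    · rcases (hinl _).1 hxγ with h | h
      exacts [absurd h hbM, absurd h hbN]
    · rcases (hinl _).1 hxγ with h | h <;> tauto
    · rcases (hinl _).1 hxγ with h | h <;> tauto
    · exact absurd ((hinr _).1 hxγ) hbT
    · have h := (hinr _).1 hxγ; tauto
    · have h := (hinr _).1 hxγ; tauto
  have A4 : Np ∈ gM ∨ Np ∈ gN ∨ Nm ∈ gM ∨ Nm ∈ gN ∨ Mm ∈ gT ∨ Mp ∈ gT := by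
    obtain ⟨x, hxγ, hx4⟩ := hblock.2.2.2.1
    simp only [attainSet4, Set.mem_insert_iff, Set.mem_singleton_iff] at hx4
    rcases hx4 with rfl | rfl | rfl | rfl | rfl | rfl
    · rcases (hinl _).1 hxγ with h | h
      exacts [absurd h hbM, absurd h hbN]
    · rcases (hinl _).1 hxγ with h | h <;> tauto
    · rcases (hinl _).1 hxγ with h | h <;> tauto
    · exact absurd ((hinr _).1 hxγ) hbT
    · have h := (hinr _).1 hxγ; tauto
    · have h := (hinr _).1 hxγ; tauto
  have A5 : Mm ∈ gM ∨ Mm ∈ gN ∨ Nm ∈ gM ∨ Nm ∈ gN ∨ Mm ∈ gT ∨ Nm ∈ gT := by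
    obtain ⟨x, hxγ, hx5⟩ := hblock.2.2.2.2
    simp only [attainSet5, Set.mem_insert_iff, Set.mem_singleton_iff] at hx5
    rcases hx5 with rfl | rfl | rfl | rfl | rfl | rfl
    · rcases (hinl _).1 hxγ with h | h
      exacts [absurd h hbM, absurd h hbN]
    · rcases (hinl _).1 hxγ with h | h <;> tauto
    · rcases (hinl _).1 hxγ with h | h <;> tauto
    · exact absurd ((hinr _).1 hxγ) hbT
    · have h := (hinr _).1 hxγ; tauto
    · have h := (hinr _).1 hxγ; tauto
  have hkey := key2 (decide (top ∈ gM)) (decide (Mp ∈ gM)) (decide (Mm ∈ gM))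
      (decide (Np ∈ gM)) (decide (Nm ∈ gM)) (decide (top ∈ gN)) (decide (Mp ∈ gN))
      (decide (Mm ∈ gN)) (decide (Np ∈ gN)) (decide (Nm ∈ gN)) (decide (top ∈ gT))
      (decide (Mp ∈ gT)) (decide (Mm ∈ gT)) (decide (Np ∈ gT)) (decide (Nm ∈ gT))
      (by
        simp only [keyHyp, Bool.and_eq_true, Bool.or_eq_true, Bool.not_eq_true',
          decide_eq_true_eq, decide_eq_false_iff_not]
        exact ⟨not_or_of_imp fun h => hupM _ h _ trivial,
          not_or_of_imp fun h => hupM _ h _ trivial,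
          not_or_of_imp fun h => hupM _ h _ trivial,
          not_or_of_imp fun h => hupM _ h _ trivial,
          not_or_of_imp fun h => hupN _ h _ trivial,
          not_or_of_imp fun h => hupN _ h _ trivial,
          not_or_of_imp fun h => hupN _ h _ trivial,
          not_or_of_imp fun h => hupN _ h _ trivial,
          not_or_of_imp fun h => hupT _ h _ trivial,
          not_or_of_imp fun h => hupT _ h _ trivial,
          not_or_of_imp fun h => hupT _ h _ trivial,
          not_or_of_imp fun h => hupT _ h _ trivial,
          A1, A2, A3, A4, A5⟩)
  simp only [keyConc, Bool.or_eq_true, Bool.and_eq_true, Bool.not_eq_true',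
    decide_eq_true_eq, decide_eq_false_iff_not] at hkey
  simp only [Set.mem_union]
  clear hinl hinr A1 A2 A3 A4 A5 hblock
  rcases hkey with h | h | h | h | h | h | h | h |
    ⟨⟨hpM, hmM, hnM⟩, ⟨htN, hpN, hqN, hnN, hmN⟩, htT, hmT, hqT, hnT⟩ |
    ⟨⟨htM, hpM, hmM, hqM, hnM⟩, ⟨htN, hpN, hmN, hnN⟩, htT, hpT, hmT, hqT, hnT⟩
  · exact Or.inl (Or.inl h)
  · exact Or.inl (Or.inr (Or.inl h))
  · exact Or.inl (Or.inr (Or.inr (Or.inl h)))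
  · exact Or.inl (Or.inr (Or.inr (Or.inr (Or.inl h))))
  · exact Or.inl (Or.inr (Or.inr (Or.inr (Or.inr (Or.inl h)))))
  · exact Or.inl (Or.inr (Or.inr (Or.inr (Or.inr (Or.inr h)))))
  · exact Or.inr (Or.inl ⟨⟨h.1, h.2.1, h.2.2.1⟩, h.2.2.2⟩)
  · exact Or.inr (Or.inr (Or.inl h))
  · refine Or.inr (Or.inr (Or.inr (Or.inl ⟨?_, ?_, htT, ?_⟩)))
    · intro x hx
      cases x <;> simp only [Set.mem_insert_iff, Set.mem_singleton_iff, Set.mem_empty_iff_false] <;> tauto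
    · ext x
      cases x <;> simp only [Set.mem_insert_iff, Set.mem_singleton_iff, Set.mem_empty_iff_false] <;> tauto
    · intro x hx
      cases x <;> simp only [Set.mem_insert_iff, Set.mem_singleton_iff, Set.mem_empty_iff_false] <;> tauto
  · refine Or.inr (Or.inr (Or.inr (Or.inr ⟨?_, htN, ?_, ?_⟩)))
    · ext x
      cases x <;> simp only [Set.mem_insert_iff, Set.mem_singleton_iff, Set.mem_empty_iff_false] <;> tauto
    · intro x hx
      cases x <;> simp only [Set.mem_insert_iff, Set.mem_singleton_iff, Set.mem_empty_iff_false] <;> tauto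
    · ext x
      cases x <;> simp only [Set.mem_insert_iff, Set.mem_singleton_iff, Set.mem_empty_iff_false] <;> tauto
end

section
/- Let M and N be matroids on a common finite ground set E. Then E admits a partition E = P ⊔ Q such that there exist disjoint sets S^M, S^N ⊆ P with S^M spanning in the restriction M|P and S^N spanning in N|P, and there exist sets I^M, I^N with I^M ∪ I^N = Q, I^M independent in the contraction M.Q and I^N independent in N.Q. -/
open Matroid Set

variable {α : Type*}

/-- Deletion of a set from a matroid: restriction to the complement. -/
def Matroid.del (M : Matroid α) (D : Set α) : Matroid α := M ↾ (M.E \ D)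

/-- Contraction of a set in a matroid, defined by duality. -/
def Matroid.con (M : Matroid α) (C : Set α) : Matroid α := ((M✶.del C))✶

/-- A circuit: a minimal dependent set. -/
def IsCircuitOf (M : Matroid α) (C : Set α) : Prop := Minimal M.Dep C

/-- A wave for the pair `(M, N)`: disjoint sets `SM, SN ⊆ X` spanning `X`
in the respective restrictions. -/
def IsWave (M N : Matroid α) (X SM SN : Set α) : Prop :=
  SM ⊆ X ∧ SN ⊆ X ∧ X ⊆ M.E ∧ Disjoint SM SN ∧
  (M ↾ X).Spanning SM ∧ (N ↾ X).Spanning SN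

section Development

namespace Matroid
variable {M : Matroid α} {I J X Y R Z : Set α} {e x : α}

noncomputable def erx (M : Matroid α) (X : Set α) : ℕ∞ := (M.exists_isBasis' X).choose.encard

lemma IsBasis'.erx_eq (h : M.IsBasis' I X) : M.erx X = I.encard :=
  (M.exists_isBasis' X).choose_spec.encard_eq_encard h

lemma Indep.encard_le_erx (hI : M.Indep I) (hIX : I ⊆ X) : I.encard ≤ M.erx X := by
  obtain ⟨J, hJ, hIJ⟩ := hI.subset_isBasis'_of_subset hIX
  rw [hJ.erx_eq]; exact encard_le_encard hIJ

lemma erx_mono (M : Matroid α) (hXY : X ⊆ Y) : M.erx X ≤ M.erx Y := by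
  obtain ⟨I, hI⟩ := M.exists_isBasis' X
  rw [hI.erx_eq]; exact hI.indep.encard_le_erx (hI.subset.trans hXY)

lemma erx_insert_le (M : Matroid α) (e : α) (X : Set α) :
    M.erx (insert e X) ≤ M.erx X + 1 := by
  obtain ⟨I, hI⟩ := M.exists_isBasis' X
  obtain ⟨J, hJ, hIJ⟩ := hI.indep.subset_isBasis'_of_subset (hI.subset.trans (subset_insert e X))
  have hJI : J ⊆ insert e I := by
    intro x hx
    by_contra hxI
    have hxX : x ∈ X := by
      rcases hJ.subset hx with h | h
      · exact absurd h (by simp_all)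
      · exact h
    exact hI.insert_not_indep ⟨hxX, fun h => hxI (Or.inr h)⟩
      (hJ.indep.subset (insert_subset hx hIJ))
  rw [hJ.erx_eq, hI.erx_eq]
  exact (encard_le_encard hJI).trans ((encard_insert_le _ _))

lemma erx_insert_eq_of_mem_closure (he : e ∈ M.closure X) :
    M.erx (insert e X) = M.erx X := by
  refine le_antisymm ?_ (M.erx_mono (subset_insert e X))
  obtain ⟨I, hI⟩ := M.exists_isBasis' X
  have hIcl : M.closure I = M.closure X := hI.closure_eq_closure
  have hbasis : M.IsBasis' I (insert e X) := by
    refine ⟨⟨hI.indep, hI.subset.trans (subset_insert e X)⟩, fun J hJ hIJ => ?_⟩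
    intro x hx
    by_contra hxI
    have hxind : M.Indep (insert x I) := hJ.1.subset (insert_subset hx hIJ)
    rcases hJ.2 hx with rfl | hxX
    · rw [hI.indep.insert_indep_iff_of_notMem hxI] at hxind
      exact hxind.2 (hIcl ▸ he)
    · exact hI.insert_not_indep ⟨hxX, hxI⟩ hxind
  rw [hbasis.erx_eq, hI.erx_eq]


lemma erx_le_encard (M : Matroid α) (X : Set α) : M.erx X ≤ X.encard := by
  obtain ⟨I, hI⟩ := M.exists_isBasis' X
  rw [hI.erx_eq]; exact encard_le_encard hI.subset

lemma erx_ne_top (M : Matroid α) (hX : X.Finite) : M.erx X ≠ ⊤ :=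
  fun h => ((h ▸ M.erx_le_encard X).not_gt hX.encard_lt_top).elim

lemma erx_insert_eq_add_one (heE : e ∈ M.E) (he : e ∉ M.closure X) :
    M.erx (insert e X) = M.erx X + 1 := by
  refine le_antisymm (M.erx_insert_le e X) ?_
  obtain ⟨I, hI⟩ := M.exists_isBasis' X
  have hIcl : M.closure I = M.closure X := hI.closure_eq_closure
  have heI : e ∉ I := fun h => he (hIcl ▸ M.subset_closure I hI.indep.subset_ground h)
  have hind : M.Indep (insert e I) := by
    rw [hI.indep.insert_indep_iff_of_notMem heI, hIcl]
    exact ⟨heE, he⟩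
  have := hind.encard_le_erx (insert_subset_insert hI.subset)
  rwa [encard_insert_of_notMem heI, ← hI.erx_eq] at this

lemma mem_closure_of_erx_insert_le (heE : e ∈ M.E) (hfin : M.erx X ≠ ⊤)
    (h : M.erx (insert e X) ≤ M.erx X) : e ∈ M.closure X := by
  by_contra hne
  rw [erx_insert_eq_add_one heE hne, ENat.add_one_le_iff hfin] at h
  exact absurd h (lt_irrefl _)

lemma erx_submod (M : Matroid α) (X Y : Set α) :
    M.erx (X ∪ Y) + M.erx (X ∩ Y) ≤ M.erx X + M.erx Y := by
  obtain ⟨I, hI⟩ := M.exists_isBasis' (X ∩ Y)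
  obtain ⟨J, hJ, hIJ⟩ := hI.indep.subset_isBasis'_of_subset
    (hI.subset.trans ((inter_subset_left).trans subset_union_left))
  have h1 : (J ∩ X).encard ≤ M.erx X := (hJ.indep.inter_right X).encard_le_erx inter_subset_right
  have h2 : (J ∩ Y).encard ≤ M.erx Y := (hJ.indep.inter_right Y).encard_le_erx inter_subset_right
  have hard : (J ∩ X) ∪ (J ∩ Y) = J := by
    rw [← inter_union_distrib_left]; exact inter_eq_left.2 hJ.subset
  have hinter : I ⊆ (J ∩ X) ∩ (J ∩ Y) := by
    intro x hx; exact ⟨⟨hIJ hx, (hI.subset hx).1⟩, ⟨hIJ hx, (hI.subset hx).2⟩⟩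
  calc M.erx (X ∪ Y) + M.erx (X ∩ Y) = J.encard + I.encard := by rw [hJ.erx_eq, hI.erx_eq]
    _ ≤ ((J ∩ X) ∪ (J ∩ Y)).encard + ((J ∩ X) ∩ (J ∩ Y)).encard := by
        rw [hard]; exact add_le_add_right (encard_le_encard hinter) _
    _ = (J ∩ X).encard + (J ∩ Y).encard := encard_union_add_encard_inter _ _
    _ ≤ M.erx X + M.erx Y := add_le_add h1 h2

lemma erx_restrict (M : Matroid α) (hYR : Y ⊆ R) : (M ↾ R).erx Y = M.erx Y := by
  obtain ⟨I, hI⟩ := M.exists_isBasis' Y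
  have : (M ↾ R).IsBasis' I Y := by
    rw [isBasis'_restrict_iff]
    exact ⟨by rwa [inter_eq_left.2 hYR], hI.subset.trans hYR⟩
  rw [this.erx_eq, hI.erx_eq]

lemma IsBase.erx_ground (hB : M.IsBase B) : M.erx M.E = B.encard := by
  have : M.IsBasis' B M.E := hB.isBasis_ground.isBasis'
  rw [this.erx_eq]


lemma spanning_of_spanning_subset_closure {S T : Set α} (hS : M.Spanning S)
    (hT : T ⊆ M.E) (h : S ⊆ M.closure T) : M.Spanning T := by
  rw [spanning_iff_closure_eq] at hS ⊢
  refine (M.closure_subset_ground T).antisymm ?_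
  rw [← hS]
  exact M.closure_subset_closure_of_subset_closure h

lemma IsBase.not_spanning_diff_singleton (hB : M.IsBase B) (hx : x ∈ B) :
    ¬ M.Spanning (B \ {x}) := by
  intro hsp
  obtain ⟨B₀, hB₀, hB₀sub⟩ := hsp.exists_isBase_subset
  have : B₀ = B := hB₀.eq_of_subset_isBase hB (hB₀sub.trans diff_subset)
  exact (hB₀sub (this ▸ hx)).2 rfl

/-- The key fact about bases: if `A` is a base, `x ∈ A`, and removing `x` keeps a
spanning set modulo closure of `A \ {x}`, contradiction. -/
lemma IsBase.not_spanning_of_closure (hA : M.IsBase B) (hx : x ∈ B) {S : Set α}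
    (hS : S ⊆ M.closure (B \ {x})) (hSsp : M.Spanning S) : False :=
  hA.not_spanning_diff_singleton hx
    (spanning_of_spanning_subset_closure hSsp (diff_subset.trans hA.subset_ground) hS)

/-- Dual rank formula, additive form. -/
lemma erx_dual_add (M : Matroid α) (hZ : Z ⊆ M.E) :
    M✶.erx Z + M.erx M.E = Z.encard + M.erx (M.E \ Z) := by
  obtain ⟨B₀, hB₀⟩ := M.exists_isBasis' (M.E \ Z)
  obtain ⟨A, hA, hB₀A⟩ := hB₀.indep.exists_isBase_superset
  have hAE : A ⊆ M.E := hA.subset_ground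
  have hAZ : A \ Z = B₀ := by
    refine Subset.antisymm ?_ (subset_diff.2 ⟨hB₀A, (subset_diff.1 hB₀.subset).2⟩)
    intro y hy
    by_contra hyB₀
    exact hB₀.insert_not_indep ⟨⟨hAE hy.1, hy.2⟩, hyB₀⟩
      (hA.indep.subset (insert_subset hy.1 hB₀A))
  have hJ : M✶.IsBasis' (Z \ A) Z := by
    have hZA_E : Z \ A ⊆ M.E := diff_subset.trans hZ
    refine ⟨⟨?_, diff_subset⟩, fun J' hJ' hsub => ?_⟩
    · rw [show (M✶.Indep (Z \ A)) = M.Coindep (Z \ A) from rfl,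
        coindep_iff_compl_spanning hZA_E]
      refine hA.spanning.superset (fun y hy => ⟨hAE hy, fun hyz => hyz.2 hy⟩) diff_subset
    · intro y hy
      by_contra hyJ
      have hyZA : y ∈ Z ∩ A := by
        have := hJ'.2 hy
        refine ⟨this, by_contra fun hyA => hyJ ⟨this, hyA⟩⟩
      have hins : M✶.Indep (insert y (Z \ A)) := hJ'.1.subset (insert_subset hy hsub)
      rw [show (M✶.Indep (insert y (Z \ A))) = M.Coindep _ from rfl,
        coindep_iff_compl_spanning (insert_subset (hZ hyZA.1) hZA_E)] at hins
      refine hA.not_spanning_of_closure hyZA.2 ?_ hins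
      have hB₀sub : B₀ ⊆ A \ {y} :=
        subset_diff.2 ⟨hB₀A, disjoint_singleton_right.2
          (fun h => ((subset_diff.1 hB₀.subset).2.le_bot ⟨h, hyZA.1⟩ : False))⟩
      have hEZ : M.E \ Z ⊆ M.closure (A \ {y}) := by
        refine (hB₀.isBasis (diff_subset)).subset_closure.trans (M.closure_subset_closure hB₀sub)
      intro z hz
      simp only [mem_insert_iff, mem_diff, not_or] at hz
      by_cases hzZ : z ∈ Z
      · have hzA : z ∈ A := by_contra fun h => hz.2.2 ⟨hzZ, h⟩
        exact M.subset_closure (A \ {y}) (diff_subset.trans hAE) ⟨hzA, hz.2.1⟩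
      · exact hEZ ⟨hz.1, hzZ⟩
  have hAcard : (A ∩ Z).encard + (A \ Z).encard = A.encard := by
    rw [add_comm, encard_diff_add_encard_inter]
  have hZcard : (Z \ A).encard + (Z ∩ A).encard = Z.encard := encard_diff_add_encard_inter _ _
  rw [hJ.erx_eq, hA.erx_ground, hB₀.erx_eq, ← hAZ, ← hZcard, ← hAcard, inter_comm A Z]
  ring

end Matroid

namespace Matroid
variable {M : Matroid α} {I J X Y R Z : Set α} {e x : α}

lemma con_indep_of_union_indep {C IC I : Set α} (hC : C ⊆ M.E) (hIC : M.IsBasis' IC C)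
    (hI : I ⊆ M.E \ C) (h : M.Indep (I ∪ IC)) : (M.con C).Indep I := by
  obtain ⟨A, hA, hIA⟩ := h.exists_isBase_superset
  have hAE : A ⊆ M.E := hA.subset_ground
  have hICA : IC ⊆ A := (subset_union_right).trans hIA
  have hICC : IC ⊆ C := hIC.subset
  set B : Set α := M.E \ (A ∪ C) with hBdef
  have hBE : B ⊆ M.E := diff_subset
  have hBbasis : M✶.IsBasis B (M.E \ C) := by
    rw [isBasis_iff (by rw [dual_ground]; exact diff_subset)]
    refine ⟨?_, fun z hz => ⟨hz.1, fun hzC => hz.2 (Or.inr hzC)⟩, fun J hJ hBJ hJE => ?_⟩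
    · rw [show (M✶.Indep B) = M.Coindep B from rfl, coindep_iff_compl_spanning hBE,
        diff_diff_cancel_left (union_subset hAE hC)]
      exact hA.spanning.superset subset_union_left
    · refine hBJ.antisymm fun x hx => ?_
      by_contra hxB
      have hxA : x ∈ A := by
        have hxE : x ∈ M.E := (hJE hx).1
        have hxC : x ∉ C := (hJE hx).2
        by_contra hxA
        exact hxB ⟨hxE, fun h => h.elim hxA hxC⟩
      have hins : M✶.Indep (insert x B) := hJ.subset (insert_subset hx hBJ)
      rw [show (M✶.Indep (insert x B)) = M.Coindep _ from rfl,
        coindep_iff_compl_spanning (insert_subset (hJE hx).1 hBE)] at hins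
      refine hA.not_spanning_of_closure hxA ?_ hins
      have hICsub : IC ⊆ A \ {x} :=
        subset_diff.2 ⟨hICA, disjoint_singleton_right.2 fun h => (hJE hx).2 (hICC h)⟩
      have hCcl : C ⊆ M.closure (A \ {x}) := by
        have h1 := hIC.isBasis_inter_ground.subset_closure
        rw [inter_eq_left.2 hC] at h1
        exact h1.trans (M.closure_subset_closure hICsub)
      intro z hz
      have hzE : z ∈ M.E := hz.1
      have hzx : z ≠ x := fun h => hz.2 (h ▸ mem_insert x B)
      by_cases hzA : z ∈ A
      · exact M.subset_closure (A \ {x}) (diff_subset.trans hAE) ⟨hzA, hzx⟩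
      · by_cases hzC : z ∈ C
        · exact hCcl hzC
        · exact (hz.2 (mem_insert_of_mem _ ⟨hzE, fun h => h.elim hzA hzC⟩)).elim
  have hground : (M✶.del C).E = M.E \ C := rfl
  rw [Matroid.con, dual_indep_iff_exists' ]
  refine ⟨by rwa [hground], B, ?_, ?_⟩
  · rw [Matroid.del, show M✶.E \ C = M.E \ C from rfl]
    exact (isBase_restrict_iff (by rw [dual_ground]; exact diff_subset)).2 hBbasis
  · exact disjoint_left.2 fun x hxI hxB => hxB.2 (Or.inl (hIA (Or.inl hxI)))

end Matroid

/-- If there is no "tight obstruction" at `e` for the `M` side, then `e` can be added to `A`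
and the covering hypothesis is preserved. -/
private lemma moveH (M N : Matroid α) (A B : Set α) (hfinE : M.E.Finite)
    (hA : A ⊆ M.E) (hB : B ⊆ M.E) {e : α} (he : e ∈ M.E \ (A ∪ B))
    (H : ∀ X ⊆ M.E \ (A ∪ B), X.encard + M.erx A + N.erx B ≤ M.erx (X ∪ A) + N.erx (X ∪ B))
    (hnb : ¬ ∃ X ⊆ (M.E \ (A ∪ B)) \ {e},
      X.encard + M.erx A + N.erx B = M.erx (X ∪ A) + N.erx (X ∪ B) ∧ e ∈ M.closure (X ∪ A)) :
    e ∉ M.closure A ∧ ∀ X ⊆ M.E \ (insert e A ∪ B),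
      X.encard + M.erx (insert e A) + N.erx B ≤ M.erx (X ∪ insert e A) + N.erx (X ∪ B) := by
  have heE : e ∈ M.E := he.1
  have hecl : e ∉ M.closure A := by
    intro h
    exact hnb ⟨∅, empty_subset _, by simp, by simpa using h⟩
  refine ⟨hecl, fun X hX => ?_⟩
  have hXR : X ⊆ (M.E \ (A ∪ B)) \ {e} := by
    intro x hx
    have := hX hx
    simp only [mem_diff, mem_union, mem_insert_iff, not_or, mem_singleton_iff] at this ⊢
    tauto
  have hXE : X ⊆ M.E := fun x hx => (hXR hx).1.1
  have heX : e ∉ X := fun h => (hXR h).2 rfl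
  by_contra hfail
  push_neg at hfail
  have hins : insert e X ⊆ M.E \ (A ∪ B) := insert_subset he ((hXR.trans diff_subset))
  have h1 := H (insert e X) hins
  rw [insert_union, insert_union, encard_insert_of_notMem heX] at h1
  have h2 : N.erx (insert e (X ∪ B)) ≤ N.erx (X ∪ B) + 1 := N.erx_insert_le e (X ∪ B)
  have h3 : M.erx (insert e A) = M.erx A + 1 := erx_insert_eq_add_one heE hecl
  have h4 := H X (hXR.trans diff_subset)
  have h5 : M.erx (X ∪ A) ≤ M.erx (insert e (X ∪ A)) := M.erx_mono (subset_insert _ _)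
  rw [h3, union_insert] at hfail
  -- lift everything to ℕ
  have finXA : (X ∪ A).Finite := hfinE.subset (union_subset hXE hA)
  have finXB : (X ∪ B).Finite := hfinE.subset (union_subset hXE hB)
  obtain ⟨u, hu⟩ : ∃ k : ℕ, (k : ℕ∞) = M.erx (X ∪ A) := ⟨_, ENat.coe_toNat (M.erx_ne_top finXA)⟩
  obtain ⟨u', hu'⟩ : ∃ k : ℕ, (k : ℕ∞) = M.erx (insert e (X ∪ A)) := ⟨_, ENat.coe_toNat (M.erx_ne_top (finXA.insert e))⟩
  obtain ⟨v, hv⟩ : ∃ k : ℕ, (k : ℕ∞) = N.erx (X ∪ B) := ⟨_, ENat.coe_toNat (N.erx_ne_top finXB)⟩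
  obtain ⟨v', hv'⟩ : ∃ k : ℕ, (k : ℕ∞) = N.erx (insert e (X ∪ B)) := ⟨_, ENat.coe_toNat (N.erx_ne_top (finXB.insert e))⟩
  obtain ⟨ra, hra⟩ : ∃ k : ℕ, (k : ℕ∞) = M.erx A := ⟨_, ENat.coe_toNat (M.erx_ne_top (hfinE.subset hA))⟩
  obtain ⟨rb, hrb⟩ : ∃ k : ℕ, (k : ℕ∞) = N.erx B := ⟨_, ENat.coe_toNat (N.erx_ne_top (hfinE.subset hB))⟩
  obtain ⟨xc, hxc⟩ : ∃ k : ℕ, (k : ℕ∞) = X.encard := ⟨_, ENat.coe_toNat (hfinE.subset hXE).encard_lt_top.ne⟩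
  simp only [← hu, ← hu', ← hv, ← hv', ← hra, ← hrb, ← hxc] at h1 h2 h4 h5 hfail
  have n1 : xc + 1 + ra + rb ≤ u' + v' := by exact_mod_cast h1
  have n2 : v' ≤ v + 1 := by exact_mod_cast h2
  have n4 : xc + ra + rb ≤ u + v := by exact_mod_cast h4
  have n5 : u ≤ u' := by exact_mod_cast h5
  have nf : u' + v < xc + (ra + 1) + rb := by exact_mod_cast hfail
  have tightN : xc + ra + rb = u + v := by omega
  have huu : u' ≤ u := by omega
  refine hnb ⟨X, hXR, ?_, ?_⟩
  · rw [← hu, ← hv, ← hra, ← hrb, ← hxc]; exact_mod_cast tightN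
  · refine mem_closure_of_erx_insert_le heE (M.erx_ne_top finXA) ?_
    rw [← hu, ← hu']; exact_mod_cast huu

/-- Tight obstructions cannot exist on both sides simultaneously. -/
private lemma badBoth (M N : Matroid α) (A B : Set α) (hfinE : M.E.Finite)
    (hA : A ⊆ M.E) (hB : B ⊆ M.E) {e : α} (he : e ∈ M.E \ (A ∪ B))
    (H : ∀ X ⊆ M.E \ (A ∪ B), X.encard + M.erx A + N.erx B ≤ M.erx (X ∪ A) + N.erx (X ∪ B))
    (hb1 : ∃ X ⊆ (M.E \ (A ∪ B)) \ {e},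
      X.encard + M.erx A + N.erx B = M.erx (X ∪ A) + N.erx (X ∪ B) ∧ e ∈ M.closure (X ∪ A))
    (hb2 : ∃ X ⊆ (M.E \ (A ∪ B)) \ {e},
      X.encard + M.erx A + N.erx B = M.erx (X ∪ A) + N.erx (X ∪ B) ∧ e ∈ N.closure (X ∪ B)) :
    False := by
  obtain ⟨X, hX, htX, hclX⟩ := hb1
  obtain ⟨Y, hY, htY, hclY⟩ := hb2
  set U : Set α := X ∪ Y with hUdef
  have hXE : X ⊆ M.E := fun x hx => (hX hx).1.1
  have hYE : Y ⊆ M.E := fun x hx => (hY hx).1.1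
  have hUR : U ⊆ (M.E \ (A ∪ B)) \ {e} := union_subset hX hY
  have heU : e ∉ U := fun h => (hUR h).2 rfl
  -- submodularity
  have hsub1 := M.erx_submod (X ∪ A) (Y ∪ A)
  have hsub2 := N.erx_submod (X ∪ B) (Y ∪ B)
  rw [union_union_union_comm, union_self, ← inter_union_distrib_right] at hsub1 hsub2
  -- hypothesis at U and X ∩ Y
  have hHU := H U (hUR.trans diff_subset)
  have hHI := H (X ∩ Y) ((inter_subset_left.trans hX).trans diff_subset)
  have hcard := encard_union_add_encard_inter X Y
  -- closures
  have hclU1 : e ∈ M.closure (U ∪ A) :=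
    M.closure_subset_closure (union_subset_union_left A subset_union_left) hclX
  have hclU2 : e ∈ N.closure (U ∪ B) :=
    N.closure_subset_closure (union_subset_union_left B subset_union_right) hclY
  have heq1 : M.erx (insert e (U ∪ A)) = M.erx (U ∪ A) := erx_insert_eq_of_mem_closure hclU1
  have heq2 : N.erx (insert e (U ∪ B)) = N.erx (U ∪ B) := erx_insert_eq_of_mem_closure hclU2
  have hHe := H (insert e U) (insert_subset he (hUR.trans diff_subset))
  rw [insert_union, insert_union, heq1, heq2, encard_insert_of_notMem heU] at hHe
  -- lift to ℕ
  have hUE : U ⊆ M.E := union_subset hXE hYE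
  have fUA : (U ∪ A).Finite := hfinE.subset (union_subset hUE hA)
  have fUB : (U ∪ B).Finite := hfinE.subset (union_subset hUE hB)
  have fIA : ((X ∩ Y) ∪ A).Finite := hfinE.subset (union_subset (inter_subset_left.trans hXE) hA)
  have fIB : ((X ∩ Y) ∪ B).Finite := hfinE.subset (union_subset (inter_subset_left.trans hXE) hB)
  have fXA : (X ∪ A).Finite := hfinE.subset (union_subset hXE hA)
  have fXB : (X ∪ B).Finite := hfinE.subset (union_subset hXE hB)
  have fYA : (Y ∪ A).Finite := hfinE.subset (union_subset hYE hA)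
  have fYB : (Y ∪ B).Finite := hfinE.subset (union_subset hYE hB)
  obtain ⟨mU, hmU⟩ : ∃ k : ℕ, (k : ℕ∞) = M.erx (U ∪ A) := ⟨_, ENat.coe_toNat (M.erx_ne_top fUA)⟩
  obtain ⟨nU, hnU⟩ : ∃ k : ℕ, (k : ℕ∞) = N.erx (U ∪ B) := ⟨_, ENat.coe_toNat (N.erx_ne_top fUB)⟩
  obtain ⟨mI, hmI⟩ : ∃ k : ℕ, (k : ℕ∞) = M.erx ((X ∩ Y) ∪ A) := ⟨_, ENat.coe_toNat (M.erx_ne_top fIA)⟩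
  obtain ⟨nI, hnI⟩ : ∃ k : ℕ, (k : ℕ∞) = N.erx ((X ∩ Y) ∪ B) := ⟨_, ENat.coe_toNat (N.erx_ne_top fIB)⟩
  obtain ⟨mX, hmX⟩ : ∃ k : ℕ, (k : ℕ∞) = M.erx (X ∪ A) := ⟨_, ENat.coe_toNat (M.erx_ne_top fXA)⟩
  obtain ⟨nX, hnX⟩ : ∃ k : ℕ, (k : ℕ∞) = N.erx (X ∪ B) := ⟨_, ENat.coe_toNat (N.erx_ne_top fXB)⟩
  obtain ⟨mY, hmY⟩ : ∃ k : ℕ, (k : ℕ∞) = M.erx (Y ∪ A) := ⟨_, ENat.coe_toNat (M.erx_ne_top fYA)⟩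
  obtain ⟨nY, hnY⟩ : ∃ k : ℕ, (k : ℕ∞) = N.erx (Y ∪ B) := ⟨_, ENat.coe_toNat (N.erx_ne_top fYB)⟩
  obtain ⟨ra, hra⟩ : ∃ k : ℕ, (k : ℕ∞) = M.erx A := ⟨_, ENat.coe_toNat (M.erx_ne_top (hfinE.subset hA))⟩
  obtain ⟨rb, hrb⟩ : ∃ k : ℕ, (k : ℕ∞) = N.erx B := ⟨_, ENat.coe_toNat (N.erx_ne_top (hfinE.subset hB))⟩
  obtain ⟨cU, hcU⟩ : ∃ k : ℕ, (k : ℕ∞) = U.encard := ⟨_, ENat.coe_toNat (hfinE.subset hUE).encard_lt_top.ne⟩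
  obtain ⟨cI, hcI⟩ : ∃ k : ℕ, (k : ℕ∞) = (X ∩ Y).encard :=
    ⟨_, ENat.coe_toNat (hfinE.subset (inter_subset_left.trans hXE)).encard_lt_top.ne⟩
  obtain ⟨cX, hcX⟩ : ∃ k : ℕ, (k : ℕ∞) = X.encard := ⟨_, ENat.coe_toNat (hfinE.subset hXE).encard_lt_top.ne⟩
  obtain ⟨cY, hcY⟩ : ∃ k : ℕ, (k : ℕ∞) = Y.encard := ⟨_, ENat.coe_toNat (hfinE.subset hYE).encard_lt_top.ne⟩
  rw [← hUdef] at hsub1 hsub2 hcard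
  simp only [← hmU, ← hnU, ← hmI, ← hnI, ← hmX, ← hnX, ← hmY, ← hnY, ← hra, ← hrb,
    ← hcU, ← hcI, ← hcX, ← hcY] at hsub1 hsub2 hHU hHI hcard htX htY hHe
  have n1 : mU + mI ≤ mX + mY := by exact_mod_cast hsub1
  have n2 : nU + nI ≤ nX + nY := by exact_mod_cast hsub2
  have n3 : cU + ra + rb ≤ mU + nU := by exact_mod_cast hHU
  have n4 : cI + ra + rb ≤ mI + nI := by exact_mod_cast hHI
  have n5 : cU + cI = cX + cY := by exact_mod_cast hcard
  have n6 : cX + ra + rb = mX + nX := by exact_mod_cast htX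
  have n7 : cY + ra + rb = mY + nY := by exact_mod_cast htY
  have n8 : cU + 1 + ra + rb ≤ mU + nU := by exact_mod_cast hHe
  omega

lemma basis'_insert_insert {M : Matroid α} {e : α} {JA A : Set α} (hA : M.IsBasis' JA A)
    (hind : M.Indep (insert e JA)) : M.IsBasis' (insert e JA) (insert e A) := by
  refine ⟨⟨hind, insert_subset_insert hA.subset⟩, fun J hJ hIJ => ?_⟩
  intro x hx
  by_contra hxI
  have hxA : x ∈ A := by
    rcases hJ.2 hx with h | h
    · exact absurd (h ▸ mem_insert x JA) hxI
    · exact h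
  exact hA.insert_not_indep ⟨hxA, fun h => hxI (mem_insert_of_mem _ h)⟩
    (hJ.1.subset (insert_subset hx ((subset_insert e JA).trans hIJ)))

/-- The main covering induction. -/
private lemma cover_aux : ∀ n : ℕ, ∀ (M N : Matroid α) (A JA B JB : Set α),
    M.E = N.E → M.E.Finite → A ⊆ M.E → B ⊆ M.E →
    M.IsBasis' JA A → N.IsBasis' JB B →
    (M.E \ (A ∪ B)).ncard ≤ n →
    (∀ X ⊆ M.E \ (A ∪ B), X.encard + M.erx A + N.erx B ≤ M.erx (X ∪ A) + N.erx (X ∪ B)) →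
    ∃ I₁ I₂ : Set α, I₁ ∪ I₂ = M.E \ (A ∪ B) ∧ M.Indep (I₁ ∪ JA) ∧ N.Indep (I₂ ∪ JB) := by
  intro n
  induction n with
  | zero =>
    intro M N A JA B JB hE hfin hA hB hJA hJB hcard _
    have hR : M.E \ (A ∪ B) = ∅ :=
      (Set.ncard_eq_zero hfin.diff).1 (Nat.le_zero.1 hcard)
    exact ⟨∅, ∅, by rw [union_self, hR], by simpa using hJA.indep, by simpa using hJB.indep⟩
  | succ n IH =>
    intro M N A JA B JB hE hfin hA hB hJA hJB hcard H
    rcases eq_empty_or_nonempty (M.E \ (A ∪ B)) with hR | ⟨e, he⟩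
    · exact ⟨∅, ∅, by rw [union_self, hR], by simpa using hJA.indep, by simpa using hJB.indep⟩
    have heE : e ∈ M.E := he.1
    have hfinR : (M.E \ (A ∪ B)).Finite := hfin.diff
    have hcard' : ((M.E \ (A ∪ B)) \ {e}).ncard ≤ n := by
      have h1 : ((M.E \ (A ∪ B)) \ {e}).ncard < (M.E \ (A ∪ B)).ncard :=
        Set.ncard_diff_singleton_lt_of_mem he hfinR
      omega
    by_cases hb1 : ∃ X ⊆ (M.E \ (A ∪ B)) \ {e},
        X.encard + M.erx A + N.erx B = M.erx (X ∪ A) + N.erx (X ∪ B) ∧ e ∈ M.closure (X ∪ A)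
    · -- M-side blocked; do the N-side move
      have hb2 : ¬ ∃ X ⊆ (M.E \ (A ∪ B)) \ {e},
          X.encard + M.erx A + N.erx B = M.erx (X ∪ A) + N.erx (X ∪ B) ∧ e ∈ N.closure (X ∪ B) :=
        fun hb2 => badBoth M N A B hfin hA hB he H hb1 hb2
      -- symmetric form for (N, M)
      have hE' : N.E = M.E := hE.symm
      have hsetRE : N.E \ (B ∪ A) = M.E \ (A ∪ B) := by rw [hE', union_comm]
      have hB' : B ⊆ N.E := hE ▸ hB
      have hA'' : A ⊆ N.E := hE ▸ hA
      have he' : e ∈ N.E \ (B ∪ A) := hsetRE.symm ▸ he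
      have Hs : ∀ X ⊆ N.E \ (B ∪ A),
          X.encard + N.erx B + M.erx A ≤ N.erx (X ∪ B) + M.erx (X ∪ A) := by
        intro X hX
        rw [hsetRE] at hX
        calc X.encard + N.erx B + M.erx A = X.encard + M.erx A + N.erx B := by ring
          _ ≤ M.erx (X ∪ A) + N.erx (X ∪ B) := H X hX
          _ = N.erx (X ∪ B) + M.erx (X ∪ A) := by ring
      have hnb2' : ¬ ∃ X ⊆ (N.E \ (B ∪ A)) \ {e},
          X.encard + N.erx B + M.erx A = N.erx (X ∪ B) + M.erx (X ∪ A) ∧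
            e ∈ N.closure (X ∪ B) := by
        rintro ⟨X, hX, heq, hcl⟩
        rw [hsetRE] at hX
        refine hb2 ⟨X, hX, ?_, hcl⟩
        calc X.encard + M.erx A + N.erx B = X.encard + N.erx B + M.erx A := by ring
          _ = N.erx (X ∪ B) + M.erx (X ∪ A) := heq
          _ = M.erx (X ∪ A) + N.erx (X ∪ B) := by ring
      obtain ⟨hecl, H''⟩ := moveH N M B A (hE' ▸ hfin) hB' hA'' he' Hs hnb2'
      have heJB : e ∉ JB := fun h => hecl (N.subset_closure B hB' (hJB.subset h))
      have hind : N.Indep (insert e JB) := by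
        rw [hJB.indep.insert_indep_iff_of_notMem heJB, hJB.closure_eq_closure]
        exact ⟨hE ▸ heE, hecl⟩
      have hB'' : N.IsBasis' (insert e JB) (insert e B) := basis'_insert_insert hJB hind
      have hrest : N.E \ (insert e B ∪ A) = (N.E \ (B ∪ A)) \ {e} := by
        ext x; simp only [mem_diff, mem_union, mem_insert_iff, mem_singleton_iff, not_or]; tauto
      have hcard'' : (N.E \ (insert e B ∪ A)).ncard ≤ n := by
        rw [hrest, hsetRE]; exact hcard'
      obtain ⟨I₂, I₁, hunion, hI₂, hI₁⟩ := IH N M (insert e B) (insert e JB) A JA hE.symm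
        (hE' ▸ hfin) (insert_subset (hE ▸ heE) hB') hA'' hB'' hJA hcard'' H''
      refine ⟨I₁, insert e I₂, ?_, ?_, ?_⟩
      · rw [hrest, hsetRE] at hunion
        rw [union_comm, insert_union, hunion, insert_diff_singleton, insert_eq_self.2 he]
      · exact hI₁
      · rw [union_insert] at hI₂; rwa [insert_union]
    · -- M-side move
      obtain ⟨hecl, H'⟩ := moveH M N A B hfin hA hB he H hb1
      have heJA : e ∉ JA := fun h => hecl (M.subset_closure A hA (hJA.subset h))
      have hind : M.Indep (insert e JA) := by
        rw [hJA.indep.insert_indep_iff_of_notMem heJA, hJA.closure_eq_closure]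
        exact ⟨heE, hecl⟩
      have hA' : M.IsBasis' (insert e JA) (insert e A) := basis'_insert_insert hJA hind
      have hrest : M.E \ (insert e A ∪ B) = (M.E \ (A ∪ B)) \ {e} := by
        ext x; simp only [mem_diff, mem_union, mem_insert_iff, mem_singleton_iff, not_or]; tauto
      obtain ⟨I₁, I₂, hunion, hI₁, hI₂⟩ := IH M N (insert e A) (insert e JA) B JB hE hfin
        (insert_subset heE hA) hB hA' hJB (by rw [hrest]; exact hcard') (by rw [hrest] at H' ⊢; exact H')
      refine ⟨insert e I₁, I₂, ?_, ?_, hI₂⟩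
      · rw [hrest] at hunion
        rw [insert_union, hunion, insert_diff_singleton, insert_eq_self.2 he]
      · rw [union_insert] at hI₁; rwa [insert_union]

lemma Matroid.basis'_empty (M : Matroid α) : M.IsBasis' ∅ ∅ :=
  ⟨⟨M.empty_indep, Subset.rfl⟩, fun _ hJ _ => hJ.2⟩

@[simp] lemma Matroid.erx_empty (M : Matroid α) : M.erx ∅ = 0 := by
  rw [M.basis'_empty.erx_eq, encard_empty]


end Development

/-- The Packing/Covering theorem for finite matroids. -/
theorem packing_covering_finite (M N : Matroid α) (hE : M.E = N.E) (hfin : M.E.Finite) :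
    ∃ P Q : Set α, P ∪ Q = M.E ∧ Disjoint P Q ∧
      (∃ SM SN, SM ⊆ P ∧ SN ⊆ P ∧ Disjoint SM SN ∧
        (M ↾ P).Spanning SM ∧ (N ↾ P).Spanning SN) ∧
      (∃ IM IN, IM ∪ IN = Q ∧ (M.con (M.E \ Q)).Indep IM ∧ (N.con (N.E \ Q)).Indep IN) := by
  classical
  set f : Set α → ℕ∞ := fun X => M.erx X + N.erx X + (M.E \ X).encard with hf
  obtain ⟨P, hPE, hPmin0⟩ : ∃ P ∈ {X | X ⊆ M.E}, ∀ Y ∈ {X | X ⊆ M.E}, f Y ≤ f P → f P = f Y := by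
    obtain ⟨P, hPE, hP⟩ := Set.Finite.exists_minimalFor f {X | X ⊆ M.E}
      hfin.finite_subsets ⟨∅, empty_subset _⟩
    exact ⟨P, hPE, fun Y hY h => le_antisymm (hP hY h) h⟩
  simp only [mem_setOf_eq] at hPE hPmin0
  have hPmin : ∀ Y, Y ⊆ M.E → f P ≤ f Y := by
    intro Y hY
    by_contra h
    push_neg at h
    exact h.ne' (hPmin0 Y hY h.le)
  set Q : Set α := M.E \ P with hQ
  have hPQ : P ∪ Q = M.E := union_diff_cancel hPE
  have hQP : M.E \ Q = P := diff_diff_cancel_left hPE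
  refine ⟨P, Q, hPQ, disjoint_sdiff_right, ?_, ?_⟩
  · -- packing part on P
    have hPfin : P.Finite := hfin.subset hPE
    have hG1 : ((M ↾ P)✶).E = P := by rw [dual_ground, restrict_ground_eq]
    have hG2 : ((N ↾ P)✶).E = P := by rw [dual_ground, restrict_ground_eq]
    have Hpack : ∀ Z ⊆ ((M ↾ P)✶).E \ (∅ ∪ ∅),
        Z.encard + ((M ↾ P)✶).erx ∅ + ((N ↾ P)✶).erx ∅ ≤
          ((M ↾ P)✶).erx (Z ∪ ∅) + ((N ↾ P)✶).erx (Z ∪ ∅) := by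
      intro Z hZ
      have hZP : Z ⊆ P := by rw [hG1] at hZ; simpa using hZ
      rw [union_empty, Matroid.erx_empty, Matroid.erx_empty, add_zero, add_zero]
      have e1 := erx_dual_add (M ↾ P) (show Z ⊆ (M ↾ P).E by rwa [restrict_ground_eq])
      have e2 := erx_dual_add (N ↾ P) (show Z ⊆ (N ↾ P).E by rwa [restrict_ground_eq])
      rw [restrict_ground_eq, erx_restrict M Subset.rfl, erx_restrict M diff_subset] at e1
      rw [restrict_ground_eq, erx_restrict N Subset.rfl, erx_restrict N diff_subset] at e2
      have hmin := hPmin (P \ Z) (diff_subset.trans hPE)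
      simp only [hf] at hmin
      have hsplit : M.E \ (P \ Z) = (M.E \ P) ∪ Z := by
        ext x
        simp only [mem_diff, mem_union, not_and, not_not]
        constructor
        · rintro ⟨hxE, hx⟩
          by_cases hxP : x ∈ P
          · exact Or.inr (hx hxP)
          · exact Or.inl ⟨hxE, hxP⟩
        · rintro (⟨hxE, hxP⟩ | hxZ)
          · exact ⟨hxE, fun h => absurd h hxP⟩
          · exact ⟨hPE (hZP hxZ), fun _ => hxZ⟩
      have hdisj : Disjoint (M.E \ P) Z := disjoint_left.2 fun x hx hxZ => hx.2 (hZP hxZ)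
      rw [hsplit, encard_union_eq hdisj] at hmin
      -- lift to ℕ
      obtain ⟨a, ha⟩ : ∃ k : ℕ, (k : ℕ∞) = M.erx P := ⟨_, ENat.coe_toNat (M.erx_ne_top hPfin)⟩
      obtain ⟨b, hb⟩ : ∃ k : ℕ, (k : ℕ∞) = N.erx P := ⟨_, ENat.coe_toNat (N.erx_ne_top hPfin)⟩
      obtain ⟨c, hc⟩ : ∃ k : ℕ, (k : ℕ∞) = M.erx (P \ Z) :=
        ⟨_, ENat.coe_toNat (M.erx_ne_top hPfin.diff)⟩
      obtain ⟨d, hd⟩ : ∃ k : ℕ, (k : ℕ∞) = N.erx (P \ Z) :=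
        ⟨_, ENat.coe_toNat (N.erx_ne_top hPfin.diff)⟩
      obtain ⟨z, hz⟩ : ∃ k : ℕ, (k : ℕ∞) = Z.encard :=
        ⟨_, ENat.coe_toNat (hPfin.subset hZP).encard_lt_top.ne⟩
      obtain ⟨w, hw⟩ : ∃ k : ℕ, (k : ℕ∞) = (M.E \ P).encard :=
        ⟨_, ENat.coe_toNat hfin.diff.encard_lt_top.ne⟩
      obtain ⟨d1, hd1⟩ : ∃ k : ℕ, (k : ℕ∞) = ((M ↾ P)✶).erx Z :=
        ⟨_, ENat.coe_toNat (erx_ne_top _ (hPfin.subset hZP))⟩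
      obtain ⟨d2, hd2⟩ : ∃ k : ℕ, (k : ℕ∞) = ((N ↾ P)✶).erx Z :=
        ⟨_, ENat.coe_toNat (erx_ne_top _ (hPfin.subset hZP))⟩
      simp only [← ha, ← hb, ← hc, ← hd, ← hz, ← hw, ← hd1, ← hd2] at e1 e2 hmin ⊢
      have m1 : d1 + a = z + c := by exact_mod_cast e1
      have m2 : d2 + b = z + d := by exact_mod_cast e2
      have m3 : a + b + w ≤ c + d + (w + z) := by exact_mod_cast hmin
      have : z ≤ d1 + d2 := by omega
      exact_mod_cast this
    obtain ⟨I₁, I₂, hu, h1, h2⟩ := cover_aux (((M ↾ P)✶).E \ (∅ ∪ ∅)).ncard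
      ((M ↾ P)✶) ((N ↾ P)✶) ∅ ∅ ∅ ∅ (by rw [hG1, hG2]) (by rw [hG1]; exact hPfin)
      (empty_subset _) (empty_subset _) (Matroid.basis'_empty _) (Matroid.basis'_empty _)
      le_rfl Hpack
    rw [union_empty] at hu
    rw [hG1, diff_empty] at hu
    rw [union_empty] at h1 h2
    have hsp1 : (M ↾ P).Spanning (P \ I₁) := by
      have := Coindep.compl_spanning h1
      rwa [restrict_ground_eq] at this
    have hsp2 : (N ↾ P).Spanning (P \ I₂) := by
      have := Coindep.compl_spanning h2
      rwa [restrict_ground_eq] at this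
    refine ⟨P \ I₁, P \ I₂, diff_subset, diff_subset, ?_, hsp1, hsp2⟩
    refine disjoint_left.2 fun x hx1 hx2 => ?_
    have : x ∈ I₁ ∪ I₂ := hu.symm ▸ hx1.1
    exact this.elim hx1.2 hx2.2
  · -- covering part on Q
    obtain ⟨JP, hJP⟩ := M.exists_isBasis' P
    obtain ⟨JP', hJP'⟩ := N.exists_isBasis' P
    have hPE' : P ⊆ N.E := hE ▸ hPE
    have Hcov : ∀ X ⊆ M.E \ (P ∪ P),
        X.encard + M.erx P + N.erx P ≤ M.erx (X ∪ P) + N.erx (X ∪ P) := by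
      intro X hX
      rw [union_self] at hX
      have hXE : X ⊆ M.E := hX.trans diff_subset
      have hmin := hPmin (X ∪ P) (union_subset hXE hPE)
      simp only [hf] at hmin
      have hsplit : M.E \ P = (M.E \ (X ∪ P)) ∪ X := by
        ext x
        simp only [mem_diff, mem_union]
        constructor
        · rintro ⟨hxE, hxP⟩
          by_cases hxX : x ∈ X
          · exact Or.inr hxX
          · exact Or.inl ⟨hxE, fun h => h.elim hxX hxP⟩
        · rintro (⟨hxE, hx⟩ | hxX)
          · exact ⟨hxE, fun h => hx (Or.inr h)⟩
          · exact ⟨hXE hxX, (hX hxX).2⟩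
      have hdisj : Disjoint (M.E \ (X ∪ P)) X :=
        disjoint_left.2 fun x hx hxX => hx.2 (Or.inl hxX)
      rw [hsplit, encard_union_eq hdisj] at hmin
      -- lift
      have fXP : (X ∪ P).Finite := hfin.subset (union_subset hXE hPE)
      have fP : P.Finite := hfin.subset hPE
      obtain ⟨a, ha⟩ : ∃ k : ℕ, (k : ℕ∞) = M.erx P := ⟨_, ENat.coe_toNat (M.erx_ne_top fP)⟩
      obtain ⟨b, hb⟩ : ∃ k : ℕ, (k : ℕ∞) = N.erx P := ⟨_, ENat.coe_toNat (N.erx_ne_top fP)⟩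
      obtain ⟨c, hc⟩ : ∃ k : ℕ, (k : ℕ∞) = M.erx (X ∪ P) := ⟨_, ENat.coe_toNat (M.erx_ne_top fXP)⟩
      obtain ⟨d, hd⟩ : ∃ k : ℕ, (k : ℕ∞) = N.erx (X ∪ P) := ⟨_, ENat.coe_toNat (N.erx_ne_top fXP)⟩
      obtain ⟨p, hp⟩ : ∃ k : ℕ, (k : ℕ∞) = (M.E \ (X ∪ P)).encard :=
        ⟨_, ENat.coe_toNat hfin.diff.encard_lt_top.ne⟩
      obtain ⟨q, hq⟩ : ∃ k : ℕ, (k : ℕ∞) = X.encard :=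
        ⟨_, ENat.coe_toNat (hfin.subset hXE).encard_lt_top.ne⟩
      simp only [← ha, ← hb, ← hc, ← hd, ← hp, ← hq] at hmin ⊢
      have : a + b + (p + q) ≤ c + d + p := by exact_mod_cast hmin
      have hgoal : q + a + b ≤ c + d := by omega
      exact_mod_cast hgoal
    obtain ⟨I₁, I₂, hu, h1, h2⟩ := cover_aux (M.E \ (P ∪ P)).ncard M N P JP P JP'
      hE hfin hPE hPE hJP hJP' le_rfl Hcov
    rw [union_self] at hu
    have hI₁ : I₁ ⊆ M.E \ P := hu ▸ subset_union_left
    have hI₂ : I₂ ⊆ M.E \ P := hu ▸ subset_union_right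
    refine ⟨I₁, I₂, by rw [hu], ?_, ?_⟩
    · rw [hQP]
      exact con_indep_of_union_indep hPE hJP hI₁ h1
    · have hQP' : N.E \ Q = P := by rw [← hE]; exact hQP
      rw [hQP']
      exact con_indep_of_union_indep hPE' hJP' (by rwa [hE] at hI₂) h2
end
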